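/- Let A' = (f'₁, f'₂, f'₄, f'₆). Then det(f'₁ f'₂ f'₄ f'₆) ≡ 1 (mod 3); the set 𝒢_{A'} is well defined, the additive subsemigroup S_{A'} of ℤ⁴ generated by 𝒢_{A'} is pointed (S_{A'} ∩ (−S_{A'}) = {0}), and the convex cone in ℝ⁴ generated by 𝒢_{A'} equals the convex cone generated by the five vectors (0,0,0,1), (0,1,0,0), (0,1,3,0), (1,0,0,−1), (1,0,3,0). -/

import Mathlib

/-- The seven lattice points `f'₁, …, f'₇` (0-indexed as `f' 0, …, f' 6`). -/
def f' : Fin 7 → (Fin 4 → ℤ) :=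
  ![![0,0,0,1], ![0,1,0,0], ![0,2,3,0], ![1,0,0,-1], ![1,1,3,0],
    ![0,1,1,0], ![1,1,2,0]]

/-- The Hilbert basis `ℋ' = {f'₁, …, f'₇}`. -/
def Hset' : Set (Fin 4 → ℤ) := Set.range f'

/-- The ordered tuple `A' = (f'₁, f'₂, f'₄, f'₆)`. -/
def A' : Fin 4 → (Fin 4 → ℤ) := ![f' 0, f' 1, f' 3, f' 5]

/-- The 4×4 integer matrix whose columns are the members of a family of four vectors. -/
def colMat (c : Fin 4 → (Fin 4 → ℤ)) : Matrix (Fin 4) (Fin 4) ℤ :=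
  Matrix.of fun i j => c j i

/-- The set `𝒢_{A'} = ℋ' ∪ {g − aⱼ : g ∈ ℋ'∖A', det of (A' with column aⱼ replaced by g) ≢ 0 mod 3}`. -/
def GA' : Set (Fin 4 → ℤ) :=
  Hset' ∪ {x | ∃ g ∈ Hset', (∀ j, g ≠ A' j) ∧
    ∃ j : Fin 4, x = g - A' j ∧ (((colMat (Function.update A' j g)).det : ZMod 3) ≠ 0)}

/-- The subsemigroup `S_{A'}` of `ℤ⁴` generated by `𝒢_{A'}`. -/
def SA' : AddSubmonoid (Fin 4 → ℤ) := AddSubmonoid.closure GA'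

/-- Coercion of an integer vector to a real vector. -/
def toR (v : Fin 4 → ℤ) : Fin 4 → ℝ := fun j => (v j : ℝ)

/-- The convex cone in `ℝ⁴` generated by a set of integer vectors. -/
def coneOf (T : Set (Fin 4 → ℤ)) : Set (Fin 4 → ℝ) :=
  {x | ∃ s : Finset (Fin 4 → ℤ), ↑s ⊆ T ∧ ∃ c : (Fin 4 → ℤ) → ℝ,
    (∀ v, 0 ≤ c v) ∧ x = ∑ v ∈ s, c v • toR v}

/-! ### Auxiliary material -/

/-- Explicit 15-element superset of `GA'` (in fact equal to it). -/
def GS : Set (Fin 4 → ℤ) :=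
  {![0,0,0,1], ![0,1,0,0], ![0,2,3,0], ![1,0,0,-1], ![1,1,3,0], ![0,1,1,0], ![1,1,2,0],
   ![0,1,3,0], ![1,1,3,-1], ![1,0,3,0], ![0,1,3,1], ![1,1,2,-1], ![1,0,2,0], ![0,1,2,1],
   ![1,0,1,0]}

lemma GA'_sub : GA' ⊆ GS := by
  intro v hv
  rcases hv with ⟨i, rfl⟩ | ⟨g, ⟨i, rfl⟩, hne, j, rfl, hdet⟩
  · fin_cases i <;>
      · simp only [GS, Set.mem_insert_iff, Set.mem_singleton_iff]; decide
  · fin_cases i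
    · exact (hne 0 (by decide)).elim
    · exact (hne 1 (by decide)).elim
    · fin_cases j <;>
        first
          | exact (hdet (by decide)).elim
          | (simp only [GS, Set.mem_insert_iff, Set.mem_singleton_iff]; decide)
    · exact (hne 2 (by decide)).elim
    · fin_cases j <;>
        first
          | exact (hdet (by decide)).elim
          | (simp only [GS, Set.mem_insert_iff, Set.mem_singleton_iff]; decide)
    · exact (hne 3 (by decide)).elim
    · fin_cases j <;>
        first
          | exact (hdet (by decide)).elim
          | (simp only [GS, Set.mem_insert_iff, Set.mem_singleton_iff]; decide)

/-- The strictly positive linear functional used to show pointedness. -/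
def phi (v : Fin 4 → ℤ) : ℤ := 2 * v 0 + v 1 + v 3

lemma phi_pos : ∀ v ∈ GA', 0 < phi v := by
  intro v hv
  have h := GA'_sub hv
  simp only [GS, Set.mem_insert_iff, Set.mem_singleton_iff] at h
  rcases h with rfl|rfl|rfl|rfl|rfl|rfl|rfl|rfl|rfl|rfl|rfl|rfl|rfl|rfl|rfl <;> decide

lemma phi_add (x y : Fin 4 → ℤ) : phi (x + y) = phi x + phi y := by
  simp only [phi, Pi.add_apply]; ring

lemma phi_key : ∀ x ∈ SA', 0 ≤ phi x ∧ (phi x = 0 → x = 0) := by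
  intro x hx
  induction hx using AddSubmonoid.closure_induction with
  | mem v hv =>
      have h := phi_pos v hv
      exact ⟨h.le, fun h0 => absurd h0 (by omega)⟩
  | zero => exact ⟨le_of_eq (by simp [phi]), fun _ => rfl⟩
  | add x y hx hy ihx ihy =>
      rw [phi_add]
      obtain ⟨hx1, hx2⟩ := ihx
      obtain ⟨hy1, hy2⟩ := ihy
      refine ⟨by omega, fun h0 => ?_⟩
      have hx0 : x = 0 := hx2 (by omega)
      have hy0 : y = 0 := hy2 (by omega)
      simp [hx0, hy0]

/-! ### Cone lemmas -/

lemma zero_mem_coneOf (T : Set (Fin 4 → ℤ)) : (0 : Fin 4 → ℝ) ∈ coneOf T :=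
  ⟨∅, by simp, fun _ => 0, fun _ => le_refl 0, by simp⟩

lemma smul_single_mem_coneOf {T : Set (Fin 4 → ℤ)} {v : Fin 4 → ℤ} (hv : v ∈ T)
    {r : ℝ} (hr : 0 ≤ r) : r • toR v ∈ coneOf T := by
  classical
  exact ⟨{v}, by simpa using hv, fun _ => r, fun _ => hr, by simp⟩

lemma single_mem_coneOf {T : Set (Fin 4 → ℤ)} {v : Fin 4 → ℤ} (hv : v ∈ T) :
    toR v ∈ coneOf T := by
  simpa using smul_single_mem_coneOf hv (zero_le_one)

lemma sum_ite_smul_toR (u w : Finset (Fin 4 → ℤ)) (c : (Fin 4 → ℤ) → ℝ) (hw : w ⊆ u) :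
    (∑ v ∈ u, (if v ∈ w then c v else 0) • toR v) = ∑ v ∈ w, c v • toR v := by
  classical
  calc (∑ v ∈ u, (if v ∈ w then c v else 0) • toR v)
      = ∑ v ∈ u, (if v ∈ w then c v • toR v else 0) :=
        Finset.sum_congr rfl (fun v _ => by split <;> simp)
    _ = ∑ v ∈ u ∩ w, c v • toR v := Finset.sum_ite_mem u w _
    _ = ∑ v ∈ w, c v • toR v := by rw [Finset.inter_eq_right.mpr hw]

lemma add_mem_coneOf {T : Set (Fin 4 → ℤ)} {x y : Fin 4 → ℝ}
    (hx : x ∈ coneOf T) (hy : y ∈ coneOf T) : x + y ∈ coneOf T := by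
  classical
  obtain ⟨s, hs, cs, hcs, rfl⟩ := hx
  obtain ⟨t, ht, ct, hct, rfl⟩ := hy
  refine ⟨s ∪ t, ?_, fun v => (if v ∈ s then cs v else 0) + (if v ∈ t then ct v else 0),
    ?_, ?_⟩
  · intro v hv
    rcases Finset.mem_union.1 hv with h | h
    · exact hs h
    · exact ht h
  · intro v
    apply add_nonneg
    · split
      · exact hcs v
      · exact le_refl 0
    · split
      · exact hct v
      · exact le_refl 0
  · simp only [add_smul]
    rw [Finset.sum_add_distrib,
      sum_ite_smul_toR _ _ _ Finset.subset_union_left,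
      sum_ite_smul_toR _ _ _ Finset.subset_union_right]

lemma smul_mem_coneOf {T : Set (Fin 4 → ℤ)} {x : Fin 4 → ℝ} {r : ℝ} (hr : 0 ≤ r)
    (hx : x ∈ coneOf T) : r • x ∈ coneOf T := by
  obtain ⟨s, hs, c, hc, rfl⟩ := hx
  refine ⟨s, hs, fun v => r * c v, fun v => mul_nonneg hr (hc v), ?_⟩
  rw [Finset.smul_sum]
  exact Finset.sum_congr rfl fun v _ => (smul_smul r (c v) (toR v))

lemma coneOf_subset {S T : Set (Fin 4 → ℤ)} (h : ∀ v ∈ S, toR v ∈ coneOf T) :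
    coneOf S ⊆ coneOf T := by
  classical
  rintro x ⟨s, hs, c, hc, rfl⟩
  revert hs
  induction s using Finset.induction_on with
  | empty => intro _; simpa using zero_mem_coneOf T
  | @insert a u hni ih =>
      intro hs
      rw [Finset.sum_insert hni]
      refine add_mem_coneOf (smul_mem_coneOf (hc a) (h a (hs (by simp)))) ?_
      exact ih fun v hv => hs (Finset.mem_insert_of_mem hv)

/-- Membership via an explicit nonnegative combination of five generators. -/
lemma mem5 {T : Set (Fin 4 → ℤ)} {b1 b2 b3 b4 b5 : Fin 4 → ℤ}
    (h1 : b1 ∈ T) (h2 : b2 ∈ T) (h3 : b3 ∈ T) (h4 : b4 ∈ T) (h5 : b5 ∈ T)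
    (c1 c2 c3 c4 c5 : ℝ)
    (hc : 0 ≤ c1 ∧ 0 ≤ c2 ∧ 0 ≤ c3 ∧ 0 ≤ c4 ∧ 0 ≤ c5) {x : Fin 4 → ℝ}
    (hx : x = c1 • toR b1 + c2 • toR b2 + c3 • toR b3 + c4 • toR b4 + c5 • toR b5) :
    x ∈ coneOf T := by
  obtain ⟨hc1, hc2, hc3, hc4, hc5⟩ := hc
  subst hx
  exact add_mem_coneOf (add_mem_coneOf (add_mem_coneOf (add_mem_coneOf
    (smul_single_mem_coneOf h1 hc1) (smul_single_mem_coneOf h2 hc2))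
    (smul_single_mem_coneOf h3 hc3)) (smul_single_mem_coneOf h4 hc4))
    (smul_single_mem_coneOf h5 hc5)

/-- `det(f'₁ f'₂ f'₄ f'₆) ≡ 1 (mod 3)`, the semigroup `S_{A'}` generated by `𝒢_{A'}` is
pointed, and the cone generated by `𝒢_{A'}` equals the cone generated by
`(0,0,0,1), (0,1,0,0), (0,1,3,0), (1,0,0,−1), (1,0,3,0)`. -/
theorem stmt_17 :
    ((colMat A').det : ZMod 3) = 1 ∧
    {x : Fin 4 → ℤ | x ∈ SA' ∧ -x ∈ SA'} = {0} ∧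
    coneOf GA' = coneOf {![0,0,0,1], ![0,1,0,0], ![0,1,3,0], ![1,0,0,-1], ![1,0,3,0]} := by
  refine ⟨by decide, ?_, ?_⟩
  · -- pointedness
    ext x
    simp only [Set.mem_setOf_eq, Set.mem_singleton_iff]
    constructor
    · rintro ⟨hx, hnx⟩
      have h1 := phi_key x hx
      have h2 := (phi_key (-x) hnx).1
      have h3 : phi (-x) = - phi x := by simp [phi]; ring
      exact h1.2 (by omega)
    · rintro rfl
      exact ⟨zero_mem _, by simpa using zero_mem SA'⟩
  · -- cone equality
    set B : Set (Fin 4 → ℤ) :=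
      {![0,0,0,1], ![0,1,0,0], ![0,1,3,0], ![1,0,0,-1], ![1,0,3,0]} with hB
    have hb1 : (![0,0,0,1] : Fin 4 → ℤ) ∈ B := by
      simp only [hB, Set.mem_insert_iff, Set.mem_singleton_iff]; decide
    have hb2 : (![0,1,0,0] : Fin 4 → ℤ) ∈ B := by
      simp only [hB, Set.mem_insert_iff, Set.mem_singleton_iff]; decide
    have hb3 : (![0,1,3,0] : Fin 4 → ℤ) ∈ B := by
      simp only [hB, Set.mem_insert_iff, Set.mem_singleton_iff]; decide
    have hb4 : (![1,0,0,-1] : Fin 4 → ℤ) ∈ B := by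
      simp only [hB, Set.mem_insert_iff, Set.mem_singleton_iff]; decide
    have hb5 : (![1,0,3,0] : Fin 4 → ℤ) ∈ B := by
      simp only [hB, Set.mem_insert_iff, Set.mem_singleton_iff]; decide
    apply Set.Subset.antisymm
    · apply coneOf_subset
      intro v hv
      have h := GA'_sub hv
      simp only [GS, Set.mem_insert_iff, Set.mem_singleton_iff] at h
      rcases h with rfl|rfl|rfl|rfl|rfl|rfl|rfl|rfl|rfl|rfl|rfl|rfl|rfl|rfl|rfl
      · exact mem5 hb1 hb2 hb3 hb4 hb5 1 0 0 0 0 (by norm_num)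
          (by funext i; fin_cases i <;> norm_num [toR])
      · exact mem5 hb1 hb2 hb3 hb4 hb5 0 1 0 0 0 (by norm_num)
          (by funext i; fin_cases i <;> norm_num [toR])
      · exact mem5 hb1 hb2 hb3 hb4 hb5 0 1 1 0 0 (by norm_num)
          (by funext i; fin_cases i <;> norm_num [toR])
      · exact mem5 hb1 hb2 hb3 hb4 hb5 0 0 0 1 0 (by norm_num)
          (by funext i; fin_cases i <;> norm_num [toR])
      · exact mem5 hb1 hb2 hb3 hb4 hb5 0 1 0 0 1 (by norm_num)
          (by funext i; fin_cases i <;> norm_num [toR])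
      · exact mem5 hb1 hb2 hb3 hb4 hb5 0 (2/3) (1/3) 0 0 (by norm_num)
          (by funext i; fin_cases i <;> norm_num [toR])
      · exact mem5 hb1 hb2 hb3 hb4 hb5 (1/3) 1 0 (1/3) (2/3) (by norm_num)
          (by funext i; fin_cases i <;> norm_num [toR])
      · exact mem5 hb1 hb2 hb3 hb4 hb5 0 0 1 0 0 (by norm_num)
          (by funext i; fin_cases i <;> norm_num [toR])
      · exact mem5 hb1 hb2 hb3 hb4 hb5 0 0 1 1 0 (by norm_num)
          (by funext i; fin_cases i <;> norm_num [toR])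
      · exact mem5 hb1 hb2 hb3 hb4 hb5 0 0 0 0 1 (by norm_num)
          (by funext i; fin_cases i <;> norm_num [toR])
      · exact mem5 hb1 hb2 hb3 hb4 hb5 1 0 1 0 0 (by norm_num)
          (by funext i; fin_cases i <;> norm_num [toR])
      · exact mem5 hb1 hb2 hb3 hb4 hb5 0 (1/3) (2/3) 1 0 (by norm_num)
          (by funext i; fin_cases i <;> norm_num [toR])
      · exact mem5 hb1 hb2 hb3 hb4 hb5 (1/3) 0 0 (1/3) (2/3) (by norm_num)
          (by funext i; fin_cases i <;> norm_num [toR])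
      · exact mem5 hb1 hb2 hb3 hb4 hb5 1 (1/3) (2/3) 0 0 (by norm_num)
          (by funext i; fin_cases i <;> norm_num [toR])
      · exact mem5 hb1 hb2 hb3 hb4 hb5 (2/3) 0 0 (2/3) (1/3) (by norm_num)
          (by funext i; fin_cases i <;> norm_num [toR])
    · apply coneOf_subset
      intro v hv
      simp only [hB, Set.mem_insert_iff, Set.mem_singleton_iff] at hv
      rcases hv with rfl|rfl|rfl|rfl|rfl
      · exact single_mem_coneOf (Set.mem_union_left _ ⟨0, by decide⟩)
      · exact single_mem_coneOf (Set.mem_union_left _ ⟨1, by decide⟩)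
      · exact single_mem_coneOf (Set.mem_union_right _
          ⟨f' 2, ⟨2, rfl⟩, by decide, 1, by decide, by decide⟩)
      · exact single_mem_coneOf (Set.mem_union_left _ ⟨3, by decide⟩)
      · exact single_mem_coneOf (Set.mem_union_right _
          ⟨f' 4, ⟨4, rfl⟩, by decide, 1, by decide, by decide⟩)
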